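/- Let H ∈ (1/2,1), φ ∈ L²([0,t]). Then the function g(y₁) = ∫_{y₁}^t u^H (u−y₁)^{H/2−1} (∫_{y₁}^u (u−y₂)^{H/2−1} y₂^{−H/2} |φ(y₂)| dy₂) du is finite for a.e. y₁ ∈ (0,t) and satisfies ∫_0^t y₁^{−H} g(y₁)² dy₁ < ∞. -/

import Mathlib

open MeasureTheory Set Real Function
open scoped ENNReal


lemma lintP1 {β : ℝ} (hβ : 0 < β) {c m : ℝ} (hcm : c ≤ m) :
    ∫⁻ u in Ioc c m, ENNReal.ofReal ((u - c) ^ (β - 1)) ≤ ENNReal.ofReal ((m - c) ^ β / β) := by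
  have hshift : ∫⁻ x in Ioc 0 (m - c), ENNReal.ofReal ((x + c - c) ^ (β - 1))
      = ∫⁻ u in Ioc c m, ENNReal.ofReal ((u - c) ^ (β - 1)) := by
    have := (measurePreserving_add_right volume c).setLIntegral_comp_emb
      (MeasurableEquiv.addRight c).measurableEmbedding
      (fun u => ENNReal.ofReal ((u - c) ^ (β - 1))) (Ioc 0 (m - c))
    simpa [image_add_const_Ioc] using this
  rw [← hshift]
  simp only [add_sub_cancel_right]
  have hd : (0:ℝ) ≤ m - c := by linarith
  have hint : IntegrableOn (fun x : ℝ => x ^ (β - 1)) (Ioc 0 (m - c)) := by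
    have := intervalIntegral.intervalIntegrable_rpow' (a := 0) (b := m - c) (r := β - 1) (by linarith)
    rwa [intervalIntegrable_iff_integrableOn_Ioc_of_le hd] at this
  have hnn : 0 ≤ᵐ[volume.restrict (Ioc 0 (m - c))] fun x : ℝ => x ^ (β - 1) := by
    filter_upwards [ae_restrict_mem measurableSet_Ioc] with x hx
    exact rpow_nonneg hx.1.le _
  rw [← ofReal_integral_eq_lintegral_ofReal hint hnn]
  apply ENNReal.ofReal_le_ofReal
  rw [← intervalIntegral.integral_of_le hd, integral_rpow (Or.inl (by linarith))]
  rw [sub_add_cancel, Real.zero_rpow (by positivity)]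
  simp

lemma lintP2 {γ : ℝ} (hγ : γ < -1) {c m : ℝ} (hcm : c < m) :
    ∫⁻ u in Ioi m, ENNReal.ofReal ((u - c) ^ γ) ≤ ENNReal.ofReal ((m - c) ^ (γ+1) / (-(γ+1))) := by
  have hshift : ∫⁻ x in Ioi (m - c), ENNReal.ofReal ((x + c - c) ^ γ)
      = ∫⁻ u in Ioi m, ENNReal.ofReal ((u - c) ^ γ) := by
    have := (measurePreserving_add_right volume c).setLIntegral_comp_emb
      (MeasurableEquiv.addRight c).measurableEmbedding
      (fun u => ENNReal.ofReal ((u - c) ^ γ)) (Ioi (m - c))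
    simpa [image_add_const_Ioi] using this
  rw [← hshift]
  simp only [add_sub_cancel_right]
  have hd : (0:ℝ) < m - c := by linarith
  have hint : IntegrableOn (fun x : ℝ => x ^ γ) (Ioi (m - c)) :=
    integrableOn_Ioi_rpow_of_lt hγ hd
  have hnn : 0 ≤ᵐ[volume.restrict (Ioi (m - c))] fun x : ℝ => x ^ γ := by
    filter_upwards [ae_restrict_mem measurableSet_Ioi] with x hx
    exact rpow_nonneg (hd.trans hx).le _
  rw [← ofReal_integral_eq_lintegral_ofReal hint hnn]
  apply ENNReal.ofReal_le_ofReal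
  rw [integral_Ioi_rpow_of_lt hγ hd]
  rw [neg_div, div_neg]

lemma lintP1' {β : ℝ} (hβ : 0 < β) {c m : ℝ} (hcm : m ≤ c) :
    ∫⁻ x in Ioo m c, ENNReal.ofReal ((c - x) ^ (β - 1)) ≤ ENNReal.ofReal ((c - m) ^ β / β) := by
  have hshift : ∫⁻ x in Ioo 0 (c - m), ENNReal.ofReal ((c - (c - x)) ^ (β - 1))
      = ∫⁻ u in Ioo m c, ENNReal.ofReal ((c - u) ^ (β - 1)) := by
    have := (Measure.measurePreserving_sub_left volume c).setLIntegral_comp_emb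
      (MeasurableEquiv.subLeft c).measurableEmbedding
      (fun u => ENNReal.ofReal ((c - u) ^ (β - 1))) (Ioo 0 (c - m))
    simpa [image_const_sub_Ioo] using this
  rw [← hshift]
  simp only [sub_sub_cancel]
  rw [Measure.restrict_congr_set Ioo_ae_eq_Ioc]
  have h0 := lintP1 hβ (c := 0) (m := c - m) (by linarith)
  simp only [sub_zero] at h0
  exact h0

lemma swapTriangle {a b : ℝ} {F : ℝ → ℝ → ℝ≥0∞} (hF : Measurable (uncurry F)) :
    ∫⁻ u in Ioc a b, ∫⁻ y in Ioc a u, F u y = ∫⁻ y in Ioc a b, ∫⁻ u in Ioc y b, F u y := by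
  set S : Set (ℝ × ℝ) := {p | a < p.2 ∧ p.2 ≤ p.1 ∧ p.1 ≤ b} with hS
  have hSm : MeasurableSet S := by
    apply MeasurableSet.inter (measurableSet_lt measurable_const measurable_snd)
    exact (measurableSet_le measurable_snd measurable_fst).inter
      (measurableSet_le measurable_fst measurable_const)
  have hGm : Measurable (S.indicator (uncurry F)) := hF.indicator hSm
  have L : ∫⁻ u in Ioc a b, ∫⁻ y in Ioc a u, F u y
      = ∫⁻ u, ∫⁻ y, S.indicator (uncurry F) (u, y) := by
    rw [← lintegral_indicator measurableSet_Ioc]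
    congr 1; funext u
    by_cases hu : u ∈ Ioc a b
    · rw [indicator_of_mem hu, ← lintegral_indicator measurableSet_Ioc]
      congr 1; funext y
      by_cases hy : y ∈ Ioc a u
      · rw [indicator_of_mem hy, indicator_of_mem]
        · rfl
        · exact ⟨hy.1, hy.2, hu.2⟩
      · rw [indicator_of_notMem hy, indicator_of_notMem]
        intro hmem; exact hy ⟨hmem.1, hmem.2.1⟩
    · rw [indicator_of_notMem hu]
      have : ∀ y, S.indicator (uncurry F) (u, y) = 0 := fun y =>
        indicator_of_notMem (fun hmem => hu ⟨lt_of_lt_of_le hmem.1 hmem.2.1, hmem.2.2⟩) _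
      simp [this]
  have R : ∫⁻ y in Ioc a b, ∫⁻ u in Ioc y b, F u y
      = ∫⁻ y, ∫⁻ u, S.indicator (uncurry F) (u, y) := by
    rw [← lintegral_indicator measurableSet_Ioc]
    congr 1; funext y
    by_cases hy : y ∈ Ioc a b
    · rw [indicator_of_mem hy]
      have key : ∀ u, S.indicator (uncurry F) (u, y) = (Icc y b).indicator (fun u => F u y) u := by
        intro u
        by_cases hu : u ∈ Icc y b
        · have hmem : (u, y) ∈ S := ⟨hy.1, hu.1, hu.2⟩
          rw [indicator_of_mem hu, indicator_of_mem hmem]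
          rfl
        · rw [indicator_of_notMem hu, indicator_of_notMem]
          intro hmem; exact hu ⟨hmem.2.1, hmem.2.2⟩
      rw [Measure.restrict_congr_set Ioc_ae_eq_Icc, ← lintegral_indicator measurableSet_Icc]
      exact lintegral_congr fun u => (key u).symm
    · rw [indicator_of_notMem hy]
      have : ∀ u, S.indicator (uncurry F) (u, y) = 0 := fun u =>
        indicator_of_notMem (fun hmem => hy ⟨hmem.1, le_trans hmem.2.1 hmem.2.2⟩) _
      simp [this]
  rw [L, R]
  exact lintegral_lintegral_swap hGm.aemeasurable

lemma measParam {t : ℝ} {F : ℝ → ℝ → ℝ≥0∞} (hF : Measurable (uncurry F)) :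
    Measurable fun y => ∫⁻ z in Ioo y t, F y z := by
  set S : Set (ℝ × ℝ) := {p | p.1 < p.2 ∧ p.2 < t} with hS
  have hSm : MeasurableSet S :=
    (measurableSet_lt measurable_fst measurable_snd).inter
      (measurableSet_lt measurable_snd measurable_const)
  have key : ∀ y, ∫⁻ z in Ioo y t, F y z = ∫⁻ z, S.indicator (uncurry F) (y, z) := by
    intro y
    rw [← lintegral_indicator measurableSet_Ioo]
    refine lintegral_congr fun z => ?_
    by_cases hz : z ∈ Ioo y t
    · have hmem : (y, z) ∈ S := ⟨hz.1, hz.2⟩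
      rw [indicator_of_mem hz, indicator_of_mem hmem]
      rfl
    · rw [indicator_of_notMem hz, indicator_of_notMem (fun hmem => hz ⟨hmem.1, hmem.2⟩)]
  simp only [key]
  exact (hF.indicator hSm).lintegral_prod_right'






lemma kernelBound {H t y₁ y₂ : ℝ} (hH2 : 1/2 < H) (hH1 : H < 1)
    (h1 : 0 < y₁) (h12 : y₁ < y₂) (h2t : y₂ < t) :
    ∫⁻ u in Ioc y₂ t, ENNReal.ofReal (u ^ H * (u - y₁) ^ (H/2-1) * (u - y₂) ^ (H/2-1))
      ≤ ENNReal.ofReal (t ^ H * (2/H + 1/(1-H))) * ENNReal.ofReal ((y₂ - y₁) ^ (H-1)) := by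
  have hH0 : 0 < H := by linarith
  have ht0 : 0 < t := by linarith
  set d : ℝ := y₂ - y₁ with hd
  have hd0 : 0 < d := by simp [hd]; linarith
  set m : ℝ := min (y₂ + d) t with hmdef
  have hym : y₂ < m := lt_min (by linarith) h2t
  have hmt : m ≤ t := min_le_right _ _
  have hmle : m ≤ y₂ + d := min_le_left _ _
  have hmy2d : m - y₂ ≤ d := by linarith
  have hsplit : Ioc y₂ t = Ioc y₂ m ∪ Ioc m t := (Ioc_union_Ioc_eq_Ioc hym.le hmt).symm
  calc
    ∫⁻ u in Ioc y₂ t, ENNReal.ofReal (u ^ H * (u - y₁) ^ (H/2-1) * (u - y₂) ^ (H/2-1))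
        ≤ (∫⁻ u in Ioc y₂ m, ENNReal.ofReal (u ^ H * (u - y₁) ^ (H/2-1) * (u - y₂) ^ (H/2-1)))
          + ∫⁻ u in Ioc m t, ENNReal.ofReal (u ^ H * (u - y₁) ^ (H/2-1) * (u - y₂) ^ (H/2-1)) := by
          rw [hsplit]; exact lintegral_union_le _ _ _
    _ ≤ ENNReal.ofReal (t ^ H * (2/H) * d ^ (H-1)) + ENNReal.ofReal (t ^ H * (1/(1-H)) * d ^ (H-1)) := by
          gcongr
          · -- piece 1
            calc
              ∫⁻ u in Ioc y₂ m, ENNReal.ofReal (u ^ H * (u - y₁) ^ (H/2-1) * (u - y₂) ^ (H/2-1))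
                  ≤ ∫⁻ u in Ioc y₂ m,
                      ENNReal.ofReal (t ^ H * d ^ (H/2-1)) * ENNReal.ofReal ((u - y₂) ^ (H/2-1)) := by
                    apply setLIntegral_mono' measurableSet_Ioc
                    intro u hu
                    rw [← ENNReal.ofReal_mul (by positivity)]
                    apply ENNReal.ofReal_le_ofReal
                    have hu0 : 0 < u := lt_trans (by linarith) hu.1
                    have h1' : u ^ H ≤ t ^ H := rpow_le_rpow hu0.le (hu.2.trans hmt) hH0.le
                    have h2' : (u - y₁) ^ (H/2-1) ≤ d ^ (H/2-1) :=
                      rpow_le_rpow_of_nonpos hd0 (by simp [hd]; linarith [hu.1]) (by linarith)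
                    have h3' : (0:ℝ) ≤ (u - y₂) ^ (H/2-1) := rpow_nonneg (by linarith [hu.1]) _
                    calc u ^ H * (u - y₁) ^ (H/2-1) * (u - y₂) ^ (H/2-1)
                        ≤ t ^ H * d ^ (H/2-1) * (u - y₂) ^ (H/2-1) := by
                          apply mul_le_mul_of_nonneg_right _ h3'
                          exact mul_le_mul h1' h2' (rpow_nonneg (by linarith [hu.1]) _) (rpow_nonneg ht0.le _)
                      _ = t ^ H * d ^ (H/2-1) * (u - y₂) ^ (H/2-1) := rfl
              _ = ENNReal.ofReal (t ^ H * d ^ (H/2-1)) * ∫⁻ u in Ioc y₂ m, ENNReal.ofReal ((u - y₂) ^ (H/2-1)) := by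
                    rw [lintegral_const_mul]
                    exact Measurable.ennreal_ofReal (by fun_prop)
              _ ≤ ENNReal.ofReal (t ^ H * d ^ (H/2-1)) * ENNReal.ofReal ((m - y₂) ^ (H/2) / (H/2)) := by
                    gcongr
                    have := lintP1 (β := H/2) (by linarith) (c := y₂) (m := m) hym.le
                    simpa using this
              _ ≤ ENNReal.ofReal (t ^ H * (2/H) * d ^ (H-1)) := by
                    rw [← ENNReal.ofReal_mul (by positivity)]
                    apply ENNReal.ofReal_le_ofReal
                    have h4 : (m - y₂) ^ (H/2) ≤ d ^ (H/2) :=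
                      rpow_le_rpow (by linarith) hmy2d (by linarith)
                    have h5 : d ^ (H/2-1) * d ^ (H/2) = d ^ (H-1) := by
                      rw [← rpow_add hd0]; ring_nf
                    calc t ^ H * d ^ (H/2-1) * ((m - y₂) ^ (H/2) / (H/2))
                        ≤ t ^ H * d ^ (H/2-1) * (d ^ (H/2) / (H/2)) := by
                          apply mul_le_mul_of_nonneg_left _ (by positivity)
                          apply div_le_div_of_nonneg_right h4 (by linarith) |>.trans_eq rfl
                      _ = t ^ H * (2/H) * d ^ (H-1) := by
                          rw [mul_assoc, mul_assoc]
                          congr 1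
                          rw [div_eq_mul_inv, ← h5]; ring_nf
          · -- piece 2
            rcases le_or_gt (y₂ + d) t with hle | hlt
            · have hmeq : m = y₂ + d := min_eq_left hle
              have hmy2 : m - y₂ = d := by rw [hmeq]; ring
              calc
                ∫⁻ u in Ioc m t, ENNReal.ofReal (u ^ H * (u - y₁) ^ (H/2-1) * (u - y₂) ^ (H/2-1))
                    ≤ ∫⁻ u in Ioc m t, ENNReal.ofReal (t ^ H) * ENNReal.ofReal ((u - y₂) ^ (H-2)) := by
                      apply setLIntegral_mono' measurableSet_Ioc
                      intro u hu
                      rw [← ENNReal.ofReal_mul (rpow_nonneg ht0.le _)]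
                      apply ENNReal.ofReal_le_ofReal
                      have huy2 : 0 < u - y₂ := by linarith [hu.1, hym]
                      have hu0 : 0 < u := by linarith
                      have h1' : u ^ H ≤ t ^ H := rpow_le_rpow hu0.le hu.2 hH0.le
                      have h2' : (u - y₁) ^ (H/2-1) ≤ (u - y₂) ^ (H/2-1) :=
                        rpow_le_rpow_of_nonpos huy2 (by linarith) (by linarith)
                      have h5 : (u - y₂) ^ (H/2-1) * (u - y₂) ^ (H/2-1) = (u - y₂) ^ (H-2) := by
                        rw [← rpow_add huy2]; ring_nf
                      calc u ^ H * (u - y₁) ^ (H/2-1) * (u - y₂) ^ (H/2-1)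
                          ≤ t ^ H * ((u - y₂) ^ (H/2-1) * (u - y₂) ^ (H/2-1)) := by
                            rw [mul_assoc]
                            apply mul_le_mul h1' _ (mul_nonneg (rpow_nonneg (by linarith) _) (rpow_nonneg huy2.le _)) (rpow_nonneg ht0.le _)
                            exact mul_le_mul_of_nonneg_right h2' (rpow_nonneg huy2.le _)
                        _ = t ^ H * (u - y₂) ^ (H-2) := by rw [h5]
                _ = ENNReal.ofReal (t ^ H) * ∫⁻ u in Ioc m t, ENNReal.ofReal ((u - y₂) ^ (H-2)) := by
                      rw [lintegral_const_mul]
                      exact Measurable.ennreal_ofReal (by fun_prop)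
                _ ≤ ENNReal.ofReal (t ^ H) * ENNReal.ofReal (d ^ (H-1) / (1-H)) := by
                      gcongr
                      calc ∫⁻ u in Ioc m t, ENNReal.ofReal ((u - y₂) ^ (H-2))
                          ≤ ∫⁻ u in Ioi m, ENNReal.ofReal ((u - y₂) ^ (H-2)) :=
                            lintegral_mono_set Ioc_subset_Ioi_self
                        _ ≤ ENNReal.ofReal (d ^ (H-1) / (1-H)) := by
                            have h := lintP2 (γ := H-2) (by linarith) (c := y₂) (m := m) hym
                            have e1 : H - 2 + 1 = H - 1 := by ring
                            rw [e1, neg_sub, hmy2] at h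
                            exact h
                _ ≤ ENNReal.ofReal (t ^ H * (1/(1-H)) * d ^ (H-1)) := by
                      rw [← ENNReal.ofReal_mul (rpow_nonneg ht0.le _)]
                      apply ENNReal.ofReal_le_ofReal
                      apply le_of_eq
                      ring
            · have hmeq : m = t := min_eq_right hlt.le
              rw [hmeq]
              simp only [Ioc_self, Measure.restrict_empty, lintegral_zero_measure]
              exact zero_le
    _ = ENNReal.ofReal (t ^ H * (2/H + 1/(1-H))) * ENNReal.ofReal (d ^ (H-1)) := by
          have h1H : (0:ℝ) < 1 - H := by linarith
          have n1 : (0:ℝ) ≤ t ^ H * (2/H) * d ^ (H-1) :=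
            mul_nonneg (mul_nonneg (rpow_nonneg ht0.le _) (by positivity)) (rpow_nonneg hd0.le _)
          have n2 : (0:ℝ) ≤ t ^ H * (1/(1-H)) * d ^ (H-1) :=
            mul_nonneg (mul_nonneg (rpow_nonneg ht0.le _) (by positivity)) (rpow_nonneg hd0.le _)
          rw [← ENNReal.ofReal_add n1 n2, ← ENNReal.ofReal_mul (by positivity)]
          congr 1
          ring




lemma Abound {H t y₁ : ℝ} (hH2 : 1/2 < H) (hH1 : H < 1) (h1 : 0 < y₁) (h1t : y₁ < t) :
    ∫⁻ y₂ in Ioc y₁ t, ENNReal.ofReal ((y₂ - y₁) ^ (H-1) * y₂ ^ (-(H + (1-H)/2)))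
      ≤ ENNReal.ofReal ((1/H + 2 ^ ((1:ℝ)-H) * (2/(1-H))) * y₁ ^ (-((1-H)/2))) := by
  have hH0 : 0 < H := by linarith
  have hδ : 0 < (1-H)/2 := by linarith
  set δ : ℝ := (1-H)/2 with hδdef
  set m : ℝ := min (y₁ + y₁) t with hmdef
  have hym : y₁ < m := lt_min (by linarith) h1t
  have hmt : m ≤ t := min_le_right _ _
  have hm2 : m ≤ y₁ + y₁ := min_le_left _ _
  have hsplit : Ioc y₁ t = Ioc y₁ m ∪ Ioc m t := (Ioc_union_Ioc_eq_Ioc hym.le hmt).symm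
  have key : ∫⁻ y₂ in Ioc y₁ t, ENNReal.ofReal ((y₂ - y₁) ^ (H-1) * y₂ ^ (-(H + δ)))
      ≤ ENNReal.ofReal ((1/H) * y₁ ^ (-δ)) + ENNReal.ofReal ((2 ^ ((1:ℝ)-H) * (2/(1-H))) * y₁ ^ (-δ)) := by
    rw [hsplit]
    refine (lintegral_union_le _ _ _).trans ?_
    gcongr
    · -- piece 1
      calc ∫⁻ y₂ in Ioc y₁ m, ENNReal.ofReal ((y₂ - y₁) ^ (H-1) * y₂ ^ (-(H + δ)))
          ≤ ∫⁻ y₂ in Ioc y₁ m, ENNReal.ofReal (y₁ ^ (-(H + δ))) * ENNReal.ofReal ((y₂ - y₁) ^ (H-1)) := by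
            apply setLIntegral_mono' measurableSet_Ioc
            intro y₂ hy
            rw [← ENNReal.ofReal_mul (rpow_nonneg h1.le _)]
            apply ENNReal.ofReal_le_ofReal
            rw [mul_comm]
            apply mul_le_mul_of_nonneg_right _ (rpow_nonneg (by linarith [hy.1]) _)
            exact rpow_le_rpow_of_nonpos h1 hy.1.le (by linarith)
        _ = ENNReal.ofReal (y₁ ^ (-(H + δ))) * ∫⁻ y₂ in Ioc y₁ m, ENNReal.ofReal ((y₂ - y₁) ^ (H-1)) := by
            rw [lintegral_const_mul]
            exact Measurable.ennreal_ofReal (by fun_prop)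
        _ ≤ ENNReal.ofReal (y₁ ^ (-(H + δ))) * ENNReal.ofReal ((m - y₁) ^ H / H) := by
            gcongr
            have h0 := lintP1 (β := H) hH0 (c := y₁) (m := m) hym.le
            have e : H - 1 = H - 1 := rfl
            simpa using h0
        _ ≤ ENNReal.ofReal ((1/H) * y₁ ^ (-δ)) := by
            rw [← ENNReal.ofReal_mul (rpow_nonneg h1.le _)]
            apply ENNReal.ofReal_le_ofReal
            have h4 : (m - y₁) ^ H ≤ y₁ ^ H := rpow_le_rpow (by linarith) (by linarith) hH0.le
            have h5 : y₁ ^ (-(H + δ)) * y₁ ^ H = y₁ ^ (-δ) := by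
              rw [← rpow_add h1]; ring_nf
            calc y₁ ^ (-(H + δ)) * ((m - y₁) ^ H / H)
                ≤ y₁ ^ (-(H + δ)) * (y₁ ^ H / H) := by
                  apply mul_le_mul_of_nonneg_left _ (rpow_nonneg h1.le _)
                  exact div_le_div_of_nonneg_right h4 hH0.le
              _ = (1/H) * y₁ ^ (-δ) := by rw [← h5]; ring
    · -- piece 2
      rcases le_or_gt (y₁ + y₁) t with hle | hlt
      · have hmeq : m = y₁ + y₁ := min_eq_left hle
        have hm0 : 0 < m := by rw [hmeq]; linarith
        calc ∫⁻ y₂ in Ioc m t, ENNReal.ofReal ((y₂ - y₁) ^ (H-1) * y₂ ^ (-(H + δ)))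
            ≤ ∫⁻ y₂ in Ioc m t, ENNReal.ofReal (2 ^ ((1:ℝ)-H)) * ENNReal.ofReal ((y₂ - 0) ^ (-1-δ)) := by
              apply setLIntegral_mono' measurableSet_Ioc
              intro y₂ hy
              rw [← ENNReal.ofReal_mul (rpow_nonneg (by norm_num) _)]
              apply ENNReal.ofReal_le_ofReal
              have hy20 : 0 < y₂ := lt_trans hm0 hy.1
              have hyy : y₂ / 2 ≤ y₂ - y₁ := by
                have : y₁ + y₁ < y₂ := by rw [← hmeq]; exact hy.1
                linarith
              have h2' : (y₂ - y₁) ^ (H-1) ≤ (y₂/2) ^ (H-1) :=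
                rpow_le_rpow_of_nonpos (by linarith) hyy (by linarith)
              have h3' : (y₂/2) ^ (H-1) = 2 ^ ((1:ℝ)-H) * y₂ ^ (H-1) := by
                rw [div_rpow hy20.le (by norm_num : (0:ℝ) ≤ 2)]
                rw [div_eq_mul_inv, ← rpow_neg (by norm_num : (0:ℝ) ≤ 2), neg_sub]
                ring
              have h4' : y₂ ^ (H-1) * y₂ ^ (-(H + δ)) = y₂ ^ (-1-δ) := by
                rw [← rpow_add hy20]; ring_nf
              calc (y₂ - y₁) ^ (H-1) * y₂ ^ (-(H + δ))
                  ≤ (y₂/2) ^ (H-1) * y₂ ^ (-(H + δ)) :=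
                    mul_le_mul_of_nonneg_right h2' (rpow_nonneg hy20.le _)
                _ = 2 ^ ((1:ℝ)-H) * (y₂ - 0) ^ (-1-δ) := by
                    rw [h3', sub_zero, mul_assoc, h4']
          _ = ENNReal.ofReal (2 ^ ((1:ℝ)-H)) * ∫⁻ y₂ in Ioc m t, ENNReal.ofReal ((y₂ - 0) ^ (-1-δ)) := by
              rw [lintegral_const_mul]
              exact Measurable.ennreal_ofReal (by fun_prop)
          _ ≤ ENNReal.ofReal (2 ^ ((1:ℝ)-H)) * ENNReal.ofReal ((m - 0) ^ (-1-δ+1) / (-(-1-δ+1))) := by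
              gcongr
              refine (lintegral_mono_set Ioc_subset_Ioi_self).trans ?_
              exact lintP2 (by linarith) hm0
          _ ≤ ENNReal.ofReal ((2 ^ ((1:ℝ)-H) * (2/(1-H))) * y₁ ^ (-δ)) := by
              rw [← ENNReal.ofReal_mul (rpow_nonneg (by norm_num) _)]
              apply ENNReal.ofReal_le_ofReal
              have e1 : -1-δ+1 = -δ := by ring
              rw [sub_zero, e1, neg_neg]
              have h4 : m ^ (-δ) ≤ y₁ ^ (-δ) := by
                apply rpow_le_rpow_of_nonpos h1 _ (by linarith)
                rw [hmeq]; linarith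
              have h5 : (1:ℝ)/δ = 2/(1-H) := by rw [hδdef]; field_simp
              calc 2 ^ ((1:ℝ)-H) * (m ^ (-δ) / δ)
                  ≤ 2 ^ ((1:ℝ)-H) * (y₁ ^ (-δ) / δ) := by
                    apply mul_le_mul_of_nonneg_left _ (rpow_nonneg (by norm_num) _)
                    exact div_le_div_of_nonneg_right h4 hδ.le
                _ = (2 ^ ((1:ℝ)-H) * (2/(1-H))) * y₁ ^ (-δ) := by
                    rw [← h5]; ring
      · have hmeq : m = t := min_eq_right hlt.le
        rw [hmeq]
        simp only [Ioc_self, Measure.restrict_empty, lintegral_zero_measure]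
        exact zero_le
  refine key.trans ?_
  rw [← ENNReal.ofReal_add (mul_nonneg (by positivity) (rpow_nonneg h1.le _))
    (mul_nonneg (mul_nonneg (rpow_nonneg (by norm_num : (0:ℝ) ≤ 2) _)
      (div_nonneg (by norm_num) (by linarith))) (rpow_nonneg h1.le _))]
  apply ENNReal.ofReal_le_ofReal
  apply le_of_eq
  ring

lemma Jbound {H y₂ : ℝ} (hH2 : 1/2 < H) (hH1 : H < 1) (h2 : 0 < y₂) :
    ∫⁻ y₁ in Ioc 0 y₂, ENNReal.ofReal (y₁ ^ (-(H + (1-H)/2)) * (y₂ - y₁) ^ (H-1))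
      ≤ ENNReal.ofReal ((2 ^ ((1-H)/2) * (2/(1-H) + 1/H)) * y₂ ^ (-((1-H)/2))) := by
  have hH0 : 0 < H := by linarith
  have hδ : 0 < (1-H)/2 := by linarith
  set δ : ℝ := (1-H)/2 with hδdef
  have hsplit : Ioc (0:ℝ) y₂ = Ioc 0 (y₂/2) ∪ Ioc (y₂/2) y₂ :=
    (Ioc_union_Ioc_eq_Ioc (by linarith) (by linarith)).symm
  have hhalf : (0:ℝ) < y₂/2 := by linarith
  have hpow : (y₂/2) ^ (-δ) = 2 ^ δ * y₂ ^ (-δ) := by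
    rw [div_rpow h2.le (by norm_num : (0:ℝ) ≤ 2), div_eq_mul_inv,
      ← rpow_neg (by norm_num : (0:ℝ) ≤ 2), neg_neg]
    ring
  have key : ∫⁻ y₁ in Ioc (0:ℝ) y₂, ENNReal.ofReal (y₁ ^ (-(H + δ)) * (y₂ - y₁) ^ (H-1))
      ≤ ENNReal.ofReal ((2 ^ δ / δ) * y₂ ^ (-δ)) + ENNReal.ofReal ((2 ^ δ / H) * y₂ ^ (-δ)) := by
    rw [hsplit]
    refine (lintegral_union_le _ _ _).trans ?_
    gcongr
    · -- piece 1 : y₁ small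
      calc ∫⁻ y₁ in Ioc (0:ℝ) (y₂/2), ENNReal.ofReal (y₁ ^ (-(H + δ)) * (y₂ - y₁) ^ (H-1))
          ≤ ∫⁻ y₁ in Ioc (0:ℝ) (y₂/2), ENNReal.ofReal ((y₂/2) ^ (H-1)) * ENNReal.ofReal ((y₁ - 0) ^ (δ - 1)) := by
            apply setLIntegral_mono' measurableSet_Ioc
            intro y₁ hy
            rw [← ENNReal.ofReal_mul (rpow_nonneg hhalf.le _)]
            apply ENNReal.ofReal_le_ofReal
            have h2' : (y₂ - y₁) ^ (H-1) ≤ (y₂/2) ^ (H-1) :=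
              rpow_le_rpow_of_nonpos hhalf (by linarith [hy.2]) (by linarith)
            have e : -(H + δ) = δ - 1 := by rw [hδdef]; ring
            rw [sub_zero, ← e, mul_comm]
            exact mul_le_mul_of_nonneg_right h2' (rpow_nonneg hy.1.le _)
        _ = ENNReal.ofReal ((y₂/2) ^ (H-1)) * ∫⁻ y₁ in Ioc (0:ℝ) (y₂/2), ENNReal.ofReal ((y₁ - 0) ^ (δ - 1)) := by
            rw [lintegral_const_mul]
            exact Measurable.ennreal_ofReal (by fun_prop)
        _ ≤ ENNReal.ofReal ((y₂/2) ^ (H-1)) * ENNReal.ofReal ((y₂/2 - 0) ^ δ / δ) := by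
            gcongr
            exact lintP1 hδ (by linarith)
        _ ≤ ENNReal.ofReal ((2 ^ δ / δ) * y₂ ^ (-δ)) := by
            rw [← ENNReal.ofReal_mul (rpow_nonneg hhalf.le _)]
            apply ENNReal.ofReal_le_ofReal
            apply le_of_eq
            rw [sub_zero, div_eq_mul_inv ((y₂/2) ^ δ), ← mul_assoc, ← rpow_add hhalf]
            have e : H - 1 + δ = -δ := by rw [hδdef]; ring
            rw [e, hpow]
            ring
    · -- piece 2 : y₁ near y₂
      calc ∫⁻ y₁ in Ioc (y₂/2) y₂, ENNReal.ofReal (y₁ ^ (-(H + δ)) * (y₂ - y₁) ^ (H-1))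
          ≤ ∫⁻ y₁ in Ioc (y₂/2) y₂, ENNReal.ofReal ((y₂/2) ^ (-(H + δ))) * ENNReal.ofReal ((y₂ - y₁) ^ (H-1)) := by
            apply setLIntegral_mono' measurableSet_Ioc
            intro y₁ hy
            rw [← ENNReal.ofReal_mul (rpow_nonneg hhalf.le _)]
            apply ENNReal.ofReal_le_ofReal
            apply mul_le_mul_of_nonneg_right _ (rpow_nonneg (by linarith [hy.2]) _)
            exact rpow_le_rpow_of_nonpos hhalf hy.1.le (by rw [hδdef]; linarith)
        _ = ENNReal.ofReal ((y₂/2) ^ (-(H + δ))) * ∫⁻ y₁ in Ioc (y₂/2) y₂, ENNReal.ofReal ((y₂ - y₁) ^ (H-1)) := by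
            rw [lintegral_const_mul]
            exact Measurable.ennreal_ofReal (by fun_prop)
        _ ≤ ENNReal.ofReal ((y₂/2) ^ (-(H + δ))) * ENNReal.ofReal ((y₂ - y₂/2) ^ H / H) := by
            gcongr
            rw [← Measure.restrict_congr_set Ioo_ae_eq_Ioc]
            exact lintP1' hH0 (by linarith)
        _ ≤ ENNReal.ofReal ((2 ^ δ / H) * y₂ ^ (-δ)) := by
            rw [← ENNReal.ofReal_mul (rpow_nonneg hhalf.le _)]
            apply ENNReal.ofReal_le_ofReal
            apply le_of_eq
            have e0 : y₂ - y₂/2 = y₂/2 := by ring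
            rw [e0, div_eq_mul_inv ((y₂/2) ^ H), ← mul_assoc, ← rpow_add hhalf]
            have e : -(H + δ) + H = -δ := by ring
            rw [e, hpow]
            ring
  refine key.trans ?_
  rw [← ENNReal.ofReal_add (mul_nonneg (div_nonneg (rpow_nonneg (by norm_num) _) hδ.le) (rpow_nonneg h2.le _))
    (mul_nonneg (div_nonneg (rpow_nonneg (by norm_num) _) hH0.le) (rpow_nonneg h2.le _))]
  apply ENNReal.ofReal_le_ofReal
  apply le_of_eq
  have e : (2:ℝ)/(1-H) = 1/δ := by rw [hδdef]; field_simp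
  rw [e]
  ring




/-- the key square-integrability estimate: the function
`g(y₁) = ∫_{y₁}^t u^H (u−y₁)^{H/2−1} (∫_{y₁}^u (u−y₂)^{H/2−1} y₂^{−H/2} |φ(y₂)| dy₂) du`
is finite a.e. on `(0,t)` and satisfies `∫_0^t y₁^{−H} g(y₁)² dy₁ < ∞`. -/
theorem stmt19 (H t : ℝ) (hH : H ∈ Ioo (1/2 : ℝ) 1) (ht : 0 < t)
    (φ : ℝ → ℝ) (hφ : MemLp φ 2 (volume.restrict (Icc (0:ℝ) t)))
    (g : ℝ → ℝ≥0∞)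
    (hg : ∀ y₁, g y₁ = ∫⁻ u in Ioc y₁ t,
      ENNReal.ofReal (u ^ H * (u - y₁) ^ (H/2 - 1)) *
        ∫⁻ y₂ in Ioc y₁ u,
          ENNReal.ofReal ((u - y₂) ^ (H/2 - 1) * y₂ ^ (-(H/2)) * |φ y₂|)) :
    (∀ᵐ y₁ ∂(volume.restrict (Ioo (0:ℝ) t)), g y₁ < ⊤) ∧
    ∫⁻ y₁ in Ioo (0:ℝ) t, ENNReal.ofReal (y₁ ^ (-H)) * (g y₁) ^ 2 < ⊤ := by
  obtain ⟨hH2, hH1⟩ := hH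
  have hH0 : 0 < H := by linarith
  have h1H : (0:ℝ) < 1 - H := by linarith
  -- measurable representative of φ
  set φ' : ℝ → ℝ := (hφ.1).mk φ with hφ'def
  have hφ'm : Measurable φ' := (hφ.1).stronglyMeasurable_mk.measurable
  have hae : ∀ᵐ x ∂(volume : Measure ℝ), x ∈ Icc (0:ℝ) t → φ x = φ' x :=
    (ae_restrict_iff' measurableSet_Icc).mp (hφ.1).ae_eq_mk
  set ψ : ℝ → ℝ≥0∞ := fun y => ENNReal.ofReal (y ^ (-(H/2)) * |φ' y|) with hψdef
  have hψm : Measurable ψ := by fun_prop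
  set h : ℝ → ℝ≥0∞ :=
    fun y₁ => ∫⁻ y₂ in Ioo y₁ t, ENNReal.ofReal ((y₂ - y₁) ^ (H-1)) * ψ y₂ with hhdef
  have hhm : Measurable h := by
    apply measParam (F := fun y₁ y₂ => ENNReal.ofReal ((y₂ - y₁) ^ (H-1)) * ψ y₂)
    fun_prop
  set B : ℝ → ℝ≥0∞ :=
    fun y₁ => ∫⁻ y₂ in Ioo y₁ t,
      ENNReal.ofReal ((y₂ - y₁) ^ (H-1) * (y₂ ^ ((1-H)/2) * φ' y₂ ^ 2)) with hBdef
  have hBm : Measurable B := by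
    apply measParam (F := fun y₁ y₂ =>
      ENNReal.ofReal ((y₂ - y₁) ^ (H-1) * (y₂ ^ ((1-H)/2) * φ' y₂ ^ 2)))
    fun_prop
  set C0 : ℝ := t ^ H * (2/H + 1/(1-H)) with hC0def
  set C1 : ℝ := 1/H + 2 ^ ((1:ℝ)-H) * (2/(1-H)) with hC1def
  set C2 : ℝ := 2 ^ ((1-H)/2) * (2/(1-H) + 1/H) with hC2def
  -- Step 1 : g ≤ C0 * h on (0,t)
  have hgh : ∀ y₁ ∈ Ioo (0:ℝ) t, g y₁ ≤ ENNReal.ofReal C0 * h y₁ := by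
    intro y₁ hy₁
    rw [hg y₁]
    set F : ℝ → ℝ → ℝ≥0∞ := fun u y₂ =>
      ENNReal.ofReal (u ^ H * (u - y₁) ^ (H/2 - 1) *
        ((u - y₂) ^ (H/2 - 1) * (y₂ ^ (-(H/2)) * |φ' y₂|))) with hFdef
    have hFm : Measurable (uncurry F) := by fun_prop
    calc
      ∫⁻ u in Ioc y₁ t, ENNReal.ofReal (u ^ H * (u - y₁) ^ (H/2 - 1)) *
          ∫⁻ y₂ in Ioc y₁ u, ENNReal.ofReal ((u - y₂) ^ (H/2 - 1) * y₂ ^ (-(H/2)) * |φ y₂|)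
          = ∫⁻ u in Ioc y₁ t, ∫⁻ y₂ in Ioc y₁ u, F u y₂ := by
            apply setLIntegral_congr_fun measurableSet_Ioc
            intro u hu
            dsimp only
            have e1 : ∫⁻ y₂ in Ioc y₁ u, ENNReal.ofReal ((u - y₂) ^ (H/2 - 1) * y₂ ^ (-(H/2)) * |φ y₂|)
                = ∫⁻ y₂ in Ioc y₁ u, ENNReal.ofReal ((u - y₂) ^ (H/2 - 1) * (y₂ ^ (-(H/2)) * |φ' y₂|)) := by
              apply lintegral_congr_ae
              filter_upwards [ae_restrict_mem measurableSet_Ioc, ae_restrict_of_ae hae]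
                with y₂ hmem hEq
              rw [hEq ⟨le_of_lt (lt_trans hy₁.1 hmem.1), le_trans hmem.2 hu.2⟩, mul_assoc]
            rw [e1, ← lintegral_const_mul _ (by fun_prop)]
            apply setLIntegral_congr_fun measurableSet_Ioc
            intro y₂ hy₂
            have ha0 : (0:ℝ) ≤ u ^ H * (u - y₁) ^ (H/2 - 1) :=
              mul_nonneg (rpow_nonneg (by linarith [hu.1, hy₁.1]) _)
                (rpow_nonneg (by linarith [hu.1]) _)
            rw [hFdef]
            simp only []
            rw [← ENNReal.ofReal_mul ha0, mul_assoc]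
      _ = ∫⁻ y₂ in Ioc y₁ t, ∫⁻ u in Ioc y₂ t, F u y₂ := swapTriangle hFm
      _ = ∫⁻ y₂ in Ioo y₁ t, ∫⁻ u in Ioc y₂ t, F u y₂ := by
            rw [Measure.restrict_congr_set Ioo_ae_eq_Ioc]
      _ ≤ ∫⁻ y₂ in Ioo y₁ t, ENNReal.ofReal C0 * (ENNReal.ofReal ((y₂ - y₁) ^ (H-1)) * ψ y₂) := by
            apply setLIntegral_mono' measurableSet_Ioo
            intro y₂ hy₂
            have hmerge : ∫⁻ u in Ioc y₂ t, F u y₂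
                = (∫⁻ u in Ioc y₂ t,
                    ENNReal.ofReal (u ^ H * (u - y₁) ^ (H/2-1) * (u - y₂) ^ (H/2-1))) * ψ y₂ := by
              rw [← lintegral_mul_const _ (by fun_prop)]
              apply setLIntegral_congr_fun measurableSet_Ioc
              intro u hu
              have ha0 : (0:ℝ) ≤ u ^ H * (u - y₁) ^ (H/2 - 1) * (u - y₂) ^ (H/2 - 1) :=
                mul_nonneg (mul_nonneg (rpow_nonneg (by linarith [hu.1, hy₂.1, hy₁.1]) _)
                  (rpow_nonneg (by linarith [hu.1, hy₂.1]) _)) (rpow_nonneg (by linarith [hu.1]) _)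
              rw [hFdef]
              simp only []
              rw [← mul_assoc (u ^ H * (u - y₁) ^ (H/2 - 1)), ← ENNReal.ofReal_mul ha0]
            rw [hmerge]
            refine le_trans (mul_le_mul_left
              (kernelBound hH2 hH1 hy₁.1 hy₂.1 hy₂.2) (ψ y₂)) ?_
            rw [mul_assoc]
      _ = ENNReal.ofReal C0 * h y₁ := by
            rw [lintegral_const_mul _ (by fun_prop)]
  set A : ℝ → ℝ≥0∞ := fun y₁ => ∫⁻ y₂ in Ioo y₁ t,
    ENNReal.ofReal ((y₂ - y₁) ^ (H-1) * y₂ ^ (-(H + (1-H)/2))) with hAdef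
  -- Cauchy-Schwarz : h² ≤ A * B
  have hCS : ∀ y₁ ∈ Ioo (0:ℝ) t, h y₁ ^ 2 ≤ A y₁ * B y₁ := by
    intro y₁ hy₁
    set f : ℝ → ℝ≥0∞ := fun y₂ =>
      ENNReal.ofReal ((y₂ - y₁) ^ ((H-1)/2) * y₂ ^ (-(H + (1-H)/2)/2)) with hfdef
    set k : ℝ → ℝ≥0∞ := fun y₂ =>
      ENNReal.ofReal ((y₂ - y₁) ^ ((H-1)/2) * (y₂ ^ ((1-H)/4) * |φ' y₂|)) with hkdef
    have hfm : Measurable f := by fun_prop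
    have hkm : Measurable k := by fun_prop
    have hprod : h y₁ = ∫⁻ y₂ in Ioo y₁ t, (f * k) y₂ := by
      rw [hhdef]
      apply setLIntegral_congr_fun measurableSet_Ioo
      intro y₂ hy₂
      have hxy : (0:ℝ) < y₂ - y₁ := by linarith [hy₂.1]
      have hy20 : (0:ℝ) < y₂ := lt_trans hy₁.1 hy₂.1
      have e1 : (y₂ - y₁) ^ ((H-1)/2) * (y₂ - y₁) ^ ((H-1)/2) = (y₂ - y₁) ^ (H-1) := by
        rw [← rpow_add hxy]; congr 1; ring
      have e2 : y₂ ^ (-(H + (1-H)/2)/2) * y₂ ^ ((1-H)/4) = y₂ ^ (-(H/2)) := by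
        rw [← rpow_add hy20]; congr 1; ring
      rw [Pi.mul_apply, hfdef, hkdef, hψdef]
      simp only []
      rw [← ENNReal.ofReal_mul (rpow_nonneg hxy.le _),
        ← ENNReal.ofReal_mul (mul_nonneg (rpow_nonneg hxy.le _) (rpow_nonneg hy20.le _))]
      congr 1
      rw [← e1, ← e2]
      ring
    have sqhalf : ∀ x : ℝ≥0∞, (x ^ ((1:ℝ)/2)) ^ (2:ℕ) = x := by
      intro x
      rw [← ENNReal.rpow_natCast (x ^ ((1:ℝ)/2)) 2, ← ENNReal.rpow_mul]
      norm_num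
    have hconj : Real.HolderConjugate 2 2 := Real.holderConjugate_iff.mpr ⟨by norm_num, by norm_num⟩
    have hcs := ENNReal.lintegral_mul_le_Lp_mul_Lq (volume.restrict (Ioo y₁ t)) hconj
      hfm.aemeasurable hkm.aemeasurable
    have hf2 : ∫⁻ y₂ in Ioo y₁ t, f y₂ ^ (2:ℝ) = A y₁ := by
      rw [hAdef]
      apply setLIntegral_congr_fun measurableSet_Ioo
      intro y₂ hy₂
      have hxy : (0:ℝ) < y₂ - y₁ := by linarith [hy₂.1]
      have hy20 : (0:ℝ) < y₂ := lt_trans hy₁.1 hy₂.1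
      rw [hfdef]
      simp only []
      rw [ENNReal.ofReal_rpow_of_nonneg
        (mul_nonneg (rpow_nonneg hxy.le _) (rpow_nonneg hy20.le _)) (by norm_num : (0:ℝ) ≤ 2)]
      congr 1
      rw [Real.mul_rpow (rpow_nonneg hxy.le _) (rpow_nonneg hy20.le _),
        ← Real.rpow_mul hxy.le, ← Real.rpow_mul hy20.le]
      congr 1 <;> ring
    have hk2 : ∫⁻ y₂ in Ioo y₁ t, k y₂ ^ (2:ℝ) = B y₁ := by
      rw [hBdef]
      apply setLIntegral_congr_fun measurableSet_Ioo
      intro y₂ hy₂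
      have hxy : (0:ℝ) < y₂ - y₁ := by linarith [hy₂.1]
      have hy20 : (0:ℝ) < y₂ := lt_trans hy₁.1 hy₂.1
      rw [hkdef]
      simp only []
      rw [ENNReal.ofReal_rpow_of_nonneg
        (mul_nonneg (rpow_nonneg hxy.le _) (mul_nonneg (rpow_nonneg hy20.le _) (abs_nonneg _)))
        (by norm_num : (0:ℝ) ≤ 2)]
      congr 1
      rw [Real.mul_rpow (rpow_nonneg hxy.le _)
          (mul_nonneg (rpow_nonneg hy20.le _) (abs_nonneg _)),
        Real.mul_rpow (rpow_nonneg hy20.le _) (abs_nonneg _),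
        ← Real.rpow_mul hxy.le, ← Real.rpow_mul hy20.le]
      have eabs : |φ' y₂| ^ (2:ℝ) = φ' y₂ ^ 2 := by
        rw [show (2:ℝ) = ((2:ℕ):ℝ) by norm_num, Real.rpow_natCast, sq_abs]
      rw [eabs]
      congr 1 <;> ring
    rw [hprod]
    calc (∫⁻ y₂ in Ioo y₁ t, (f * k) y₂) ^ 2
        ≤ ((∫⁻ y₂ in Ioo y₁ t, f y₂ ^ (2:ℝ)) ^ ((1:ℝ)/2)
            * (∫⁻ y₂ in Ioo y₁ t, k y₂ ^ (2:ℝ)) ^ ((1:ℝ)/2)) ^ 2 := by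
          exact pow_le_pow_left' hcs 2
      _ = (∫⁻ y₂ in Ioo y₁ t, f y₂ ^ (2:ℝ)) * (∫⁻ y₂ in Ioo y₁ t, k y₂ ^ (2:ℝ)) := by
          rw [mul_pow, sqhalf, sqhalf]
      _ = A y₁ * B y₁ := by rw [hf2, hk2]
  have hC1nn : (0:ℝ) ≤ C1 := by
    rw [hC1def]
    have : (0:ℝ) ≤ 2 ^ ((1:ℝ)-H) := rpow_nonneg (by norm_num) _
    have h2' : (0:ℝ) ≤ 2/(1-H) := div_nonneg (by norm_num) h1H.le
    have h3' : (0:ℝ) ≤ 1/H := div_nonneg (by norm_num) hH0.le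
    nlinarith
  have hC2nn : (0:ℝ) ≤ C2 := by
    rw [hC2def]
    have : (0:ℝ) ≤ 2 ^ ((1-H)/2) := rpow_nonneg (by norm_num) _
    have h2' : (0:ℝ) ≤ 2/(1-H) := div_nonneg (by norm_num) h1H.le
    have h3' : (0:ℝ) ≤ 1/H := div_nonneg (by norm_num) hH0.le
    nlinarith
  -- A bound
  have hA : ∀ y₁ ∈ Ioo (0:ℝ) t, A y₁ ≤ ENNReal.ofReal (C1 * y₁ ^ (-((1-H)/2))) := by
    intro y₁ hy₁
    rw [hAdef]
    simp only []
    rw [Measure.restrict_congr_set Ioo_ae_eq_Ioc]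
    exact Abound hH2 hH1 hy₁.1 hy₁.2
  -- Q : square integral of φ' finite
  have hQ : ∫⁻ y₂ in Ioc (0:ℝ) t, ENNReal.ofReal (φ' y₂ ^ 2) < ⊤ := by
    have h3 := (eLpNorm_lt_top_iff_lintegral_rpow_enorm_lt_top (f := φ)
      (μ := volume.restrict (Icc (0:ℝ) t)) (p := 2) (by norm_num) (by norm_num)).mp hφ.2
    calc ∫⁻ y₂ in Ioc (0:ℝ) t, ENNReal.ofReal (φ' y₂ ^ 2)
        ≤ ∫⁻ y₂ in Icc (0:ℝ) t, ENNReal.ofReal (φ' y₂ ^ 2) :=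
          lintegral_mono_set Ioc_subset_Icc_self
      _ = ∫⁻ y₂ in Icc (0:ℝ) t, ‖φ y₂‖ₑ ^ (2 : ℝ≥0∞).toReal := by
          apply lintegral_congr_ae
          filter_upwards [ae_restrict_of_ae hae, ae_restrict_mem measurableSet_Icc]
            with x hEq hx
          rw [← hEq hx]
          rw [show ((2:ℝ≥0∞).toReal) = ((2:ℕ):ℝ) by norm_num, ENNReal.rpow_natCast,
            Real.enorm_eq_ofReal_abs, ← ENNReal.ofReal_pow (abs_nonneg _), sq_abs]
      _ < ⊤ := h3
  -- W bound via swap + Jbound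
  have hW : ∫⁻ y₁ in Ioo (0:ℝ) t, ENNReal.ofReal (y₁ ^ (-(H + (1-H)/2))) * B y₁
      ≤ ENNReal.ofReal C2 * ∫⁻ y₂ in Ioc (0:ℝ) t, ENNReal.ofReal (φ' y₂ ^ 2) := by
    set G : ℝ → ℝ → ℝ≥0∞ := fun y₁ y₂ => ENNReal.ofReal (y₁ ^ (-(H + (1-H)/2))) *
      ENNReal.ofReal ((y₂ - y₁) ^ (H-1) * (y₂ ^ ((1-H)/2) * φ' y₂ ^ 2)) with hGdef
    have hGm : Measurable (uncurry G) := by fun_prop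
    calc ∫⁻ y₁ in Ioo (0:ℝ) t, ENNReal.ofReal (y₁ ^ (-(H + (1-H)/2))) * B y₁
        = ∫⁻ y₁ in Ioo (0:ℝ) t, ∫⁻ y₂ in Ioo y₁ t, G y₁ y₂ := by
          apply setLIntegral_congr_fun measurableSet_Ioo
          intro y₁ hy₁
          rw [hBdef]
          exact (lintegral_const_mul _ (by fun_prop)).symm
      _ = ∫⁻ y₁ in Ioc (0:ℝ) t, ∫⁻ y₂ in Ioc y₁ t, G y₁ y₂ := by
          rw [Measure.restrict_congr_set Ioo_ae_eq_Ioc]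
          apply setLIntegral_congr_fun measurableSet_Ioc
          intro y₁ hy₁
          dsimp only
          rw [Measure.restrict_congr_set Ioo_ae_eq_Ioc]
      _ = ∫⁻ y₂ in Ioc (0:ℝ) t, ∫⁻ y₁ in Ioc 0 y₂, G y₁ y₂ :=
          (swapTriangle (F := fun y₂ y₁ => G y₁ y₂) (by fun_prop)).symm
      _ ≤ ∫⁻ y₂ in Ioc (0:ℝ) t, ENNReal.ofReal C2 * ENNReal.ofReal (φ' y₂ ^ 2) := by
          apply setLIntegral_mono' measurableSet_Ioc
          intro y₂ hy₂
          have hy20 : (0:ℝ) < y₂ := hy₂.1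
          have hmerge : ∫⁻ y₁ in Ioc (0:ℝ) y₂, G y₁ y₂
              = (∫⁻ y₁ in Ioc (0:ℝ) y₂,
                  ENNReal.ofReal (y₁ ^ (-(H + (1-H)/2)) * (y₂ - y₁) ^ (H-1)))
                * ENNReal.ofReal (y₂ ^ ((1-H)/2) * φ' y₂ ^ 2) := by
            rw [← lintegral_mul_const _ (by fun_prop)]
            apply setLIntegral_congr_fun measurableSet_Ioc
            intro y₁ hy₁
            rw [hGdef]
            simp only []
            rw [ENNReal.ofReal_mul (rpow_nonneg (sub_nonneg.mpr hy₁.2) _), ← mul_assoc,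
              ← ENNReal.ofReal_mul (rpow_nonneg hy₁.1.le _)]
          rw [hmerge]
          refine le_trans (mul_le_mul_left (Jbound hH2 hH1 hy20) _) ?_
          have e : (C2 * y₂ ^ (-((1-H)/2))) * (y₂ ^ ((1-H)/2) * φ' y₂ ^ 2) = C2 * φ' y₂ ^ 2 := by
            have e0 : y₂ ^ (-((1-H)/2)) * y₂ ^ ((1-H)/2) = 1 := by
              rw [← rpow_add hy20, neg_add_cancel, rpow_zero]
            calc (C2 * y₂ ^ (-((1-H)/2))) * (y₂ ^ ((1-H)/2) * φ' y₂ ^ 2)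
                = C2 * (y₂ ^ (-((1-H)/2)) * y₂ ^ ((1-H)/2)) * φ' y₂ ^ 2 := by ring
              _ = C2 * φ' y₂ ^ 2 := by rw [e0]; ring
          rw [← ENNReal.ofReal_mul (mul_nonneg hC2nn (rpow_nonneg hy20.le _)), e,
            ENNReal.ofReal_mul hC2nn]
      _ = ENNReal.ofReal C2 * ∫⁻ y₂ in Ioc (0:ℝ) t, ENNReal.ofReal (φ' y₂ ^ 2) :=
          lintegral_const_mul _ (by fun_prop)
  -- the key finiteness
  have key2 : ∫⁻ y₁ in Ioo (0:ℝ) t,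
      ENNReal.ofReal (y₁ ^ (-H)) * (ENNReal.ofReal C0 * h y₁) ^ 2 < ⊤ := by
    calc ∫⁻ y₁ in Ioo (0:ℝ) t, ENNReal.ofReal (y₁ ^ (-H)) * (ENNReal.ofReal C0 * h y₁) ^ 2
        = ENNReal.ofReal C0 ^ 2 * ∫⁻ y₁ in Ioo (0:ℝ) t,
            ENNReal.ofReal (y₁ ^ (-H)) * h y₁ ^ 2 := by
          rw [← lintegral_const_mul _ (by fun_prop)]
          apply setLIntegral_congr_fun measurableSet_Ioo
          intro y₁ _
          ring
      _ ≤ ENNReal.ofReal C0 ^ 2 * ∫⁻ y₁ in Ioo (0:ℝ) t,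
            ENNReal.ofReal C1 * (ENNReal.ofReal (y₁ ^ (-(H + (1-H)/2))) * B y₁) := by
          refine mul_le_mul_right (setLIntegral_mono' measurableSet_Ioo fun y₁ hy₁ => ?_) _
          calc ENNReal.ofReal (y₁ ^ (-H)) * h y₁ ^ 2
              ≤ ENNReal.ofReal (y₁ ^ (-H)) * (A y₁ * B y₁) :=
                mul_le_mul_right (hCS y₁ hy₁) _
            _ ≤ ENNReal.ofReal (y₁ ^ (-H)) * (ENNReal.ofReal (C1 * y₁ ^ (-((1-H)/2))) * B y₁) :=
                mul_le_mul_right (mul_le_mul_left (hA y₁ hy₁) _) _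
            _ = ENNReal.ofReal C1 * (ENNReal.ofReal (y₁ ^ (-(H + (1-H)/2))) * B y₁) := by
                have e : y₁ ^ (-H) * y₁ ^ (-((1-H)/2)) = y₁ ^ (-(H + (1-H)/2)) := by
                  rw [← rpow_add hy₁.1]; congr 1; ring
                rw [ENNReal.ofReal_mul hC1nn, ← e,
                  ENNReal.ofReal_mul (rpow_nonneg hy₁.1.le _)]
                ring
      _ = ENNReal.ofReal C0 ^ 2 * (ENNReal.ofReal C1 * ∫⁻ y₁ in Ioo (0:ℝ) t,
            ENNReal.ofReal (y₁ ^ (-(H + (1-H)/2))) * B y₁) := by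
          rw [lintegral_const_mul _ (by fun_prop)]
      _ ≤ ENNReal.ofReal C0 ^ 2 * (ENNReal.ofReal C1 *
            (ENNReal.ofReal C2 * ∫⁻ y₂ in Ioc (0:ℝ) t, ENNReal.ofReal (φ' y₂ ^ 2))) :=
          mul_le_mul_right (mul_le_mul_right hW _) _
      _ < ⊤ := by
          refine ENNReal.mul_lt_top ?_ (ENNReal.mul_lt_top ?_ (ENNReal.mul_lt_top ?_ hQ))
          · exact ENNReal.pow_lt_top ENNReal.ofReal_lt_top
          · exact ENNReal.ofReal_lt_top
          · exact ENNReal.ofReal_lt_top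
  constructor
  · -- a.e. finiteness of g
    have hM : Measurable fun y₁ =>
        ENNReal.ofReal (y₁ ^ (-H)) * (ENNReal.ofReal C0 * h y₁) ^ 2 := by fun_prop
    have hae2 := ae_lt_top hM key2.ne
    filter_upwards [hae2, ae_restrict_mem measurableSet_Ioo] with y₁ hM1 hmem
    have hle := hgh y₁ hmem
    have hpos : ENNReal.ofReal (y₁ ^ (-H)) ≠ 0 :=
      (ENNReal.ofReal_pos.mpr (rpow_pos_of_pos hmem.1 _)).ne'
    have h2 : (ENNReal.ofReal C0 * h y₁) ^ 2 < ⊤ := by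
      by_contra hcon
      rw [not_lt, top_le_iff] at hcon
      rw [hcon, ENNReal.mul_top hpos] at hM1
      exact absurd hM1 (lt_irrefl ⊤)
    have h3 : ENNReal.ofReal C0 * h y₁ < ⊤ := by
      by_contra hcon
      rw [not_lt, top_le_iff] at hcon
      rw [hcon, pow_two, ENNReal.top_mul_top] at h2
      exact absurd h2 (lt_irrefl ⊤)
    exact lt_of_le_of_lt hle h3
  · refine lt_of_le_of_lt (setLIntegral_mono' measurableSet_Ioo fun y₁ hy₁ => ?_) key2
    exact mul_le_mul_right (pow_le_pow_left' (hgh y₁ hy₁) 2) _
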